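/- arXiv:1409.3127 — 3 statements merged into one kernel-verified Lean document; each statement's English description precedes it below -/
import Mathlib

section
/- Fix n ≥ 2. For 1 ≤ i ≤ n+1 let L_i be the n-face of I^{n+1} whose digit at position i is 0 if i is odd and 1 if i is even (asterisks elsewhere), and let R_j be the n-face whose digit at position j is 1 if j is odd and 0 if j is even (asterisks elsewhere). Then for all i ≠ j, the (n−1)-face L_i ∩ R_j is either an incoming subface of both L_i and R_j, or an outgoing subface of both L_i and R_j. -/
/-- A face of the `N`-dimensional cube `I^N`, encoded as a function assigning to each
coordinate position either a digit (`some false` = 0, `some true` = 1) or an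
asterisk (`none`). -/
abbrev CubeFace (N : ℕ) := Fin N → Option Bool

/-- `τ` is a `k`-face: exactly `k` positions carry an asterisk. -/
def IsFace {N : ℕ} (k : ℕ) (τ : CubeFace N) : Prop :=
  (Finset.filter (fun i => τ i = none) Finset.univ).card = k

/-- The digit `κ` associated to the asterisk position `p` of `f`: if `p` is the `k`-th
asterisk position of `f` (counting 1-based from the left), then `κ = 0` (i.e. `false`)
for odd `k` and `κ = 1` (i.e. `true`) for even `k`.  Equivalently, `κ` is `true` iff the
number of asterisk positions strictly before `p` is odd. -/
def kappa {N : ℕ} (f : CubeFace N) (p : Fin N) : Bool :=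
  decide (Odd ((Finset.filter (fun q => q < p ∧ f q = none) Finset.univ).card))

/-- `g` is obtained from `f` by replacing the asterisk at position `p` by the digit `d`. -/
def SubfaceAt {N : ℕ} (f g : CubeFace N) (p : Fin N) (d : Bool) : Prop :=
  f p = none ∧ g p = some d ∧ ∀ q, q ≠ p → g q = f q

/-- `g` is an incoming subface of `f`: it is obtained from `f` by replacing the asterisk
at some position `p` by the digit `κ(f, p)`. -/
def Incoming {N : ℕ} (f g : CubeFace N) : Prop := ∃ p, SubfaceAt f g p (kappa f p)

/-- `g` is an outgoing subface of `f`: it is obtained from `f` by replacing the asterisk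
at some position `p` by the digit different from `κ(f, p)`. -/
def Outgoing {N : ℕ} (f g : CubeFace N) : Prop := ∃ p, SubfaceAt f g p (!kappa f p)

/-- The order of a face `g`: the number of `n`-faces of the cube for which `g` is an
incoming subface. -/
noncomputable def faceOrder {N : ℕ} (n : ℕ) (g : CubeFace N) : ℕ :=
  Nat.card {f : CubeFace N // IsFace n f ∧ Incoming f g}

/-- The `n`-face `L_i` of the `(n+1)`-cube: digit 0 at position `i` if the 1-based
position is odd, digit 1 if it is even, asterisks elsewhere. -/
def Lface (n : ℕ) (i : Fin (n + 1)) : CubeFace (n + 1) :=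
  fun j => if j = i then some (decide (Odd (i : ℕ))) else none

/-- The `n`-face `R_j` of the `(n+1)`-cube: digit 1 at position `j` if the 1-based
position is odd, digit 0 if it is even, asterisks elsewhere. -/
def Rface (n : ℕ) (j : Fin (n + 1)) : CubeFace (n + 1) :=
  fun q => if q = j then some (decide (Even (j : ℕ))) else none

/-- The `(n-1)`-face `L_i ∩ R_j`: digits at positions `i` and `j` as in `L_i` and `R_j`,
asterisks elsewhere. -/
def LRcap (n : ℕ) (i j : Fin (n + 1)) : CubeFace (n + 1) :=
  fun q => if q = i then some (decide (Odd (i : ℕ)))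
           else if q = j then some (decide (Even (j : ℕ))) else none

lemma card_lt_ne (N : ℕ) (p a : Fin N) :
    (Finset.filter (fun q => q < p ∧ q ≠ a) Finset.univ).card
      = if a < p then (p : ℕ) - 1 else (p : ℕ) := by
  have h1 : Finset.filter (fun q => q < p ∧ q ≠ a) Finset.univ
      = (Finset.Iio p).erase a := by
    ext q; simp [Finset.mem_erase, and_comm]
  rw [h1]
  by_cases h : a < p
  · rw [Finset.card_erase_of_mem (by simpa using h), Fin.card_Iio]; simp [h]
  · rw [Finset.erase_eq_of_notMem (by simpa using h), Fin.card_Iio]; simp [h]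

lemma kappa_L (n : ℕ) (i p : Fin (n + 1)) :
    kappa (Lface n i) p
      = decide (Odd (if i < p then (p : ℕ) - 1 else (p : ℕ))) := by
  unfold kappa
  have hset : Finset.filter (fun q => q < p ∧ Lface n i q = none) Finset.univ
      = Finset.filter (fun q => q < p ∧ q ≠ i) Finset.univ :=
    Finset.filter_congr (fun q _ => by by_cases h : q = i <;> simp [Lface, h])
  rw [hset, card_lt_ne]

lemma kappa_R (n : ℕ) (j p : Fin (n + 1)) :
    kappa (Rface n j) p
      = decide (Odd (if j < p then (p : ℕ) - 1 else (p : ℕ))) := by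
  unfold kappa
  have hset : Finset.filter (fun q => q < p ∧ Rface n j q = none) Finset.univ
      = Finset.filter (fun q => q < p ∧ q ≠ j) Finset.univ :=
    Finset.filter_congr (fun q _ => by by_cases h : q = j <;> simp [Rface, h])
  rw [hset, card_lt_ne]


/-- For `i ≠ j`, the `(n-1)`-face `L_i ∩ R_j` is either an incoming subface of both
`L_i` and `R_j`, or an outgoing subface of both. -/
theorem stmt4 (n : ℕ) (hn : 2 ≤ n) (i j : Fin (n + 1)) (hij : i ≠ j) :
    IsFace (n - 1) (LRcap n i j) ∧
    ((Incoming (Lface n i) (LRcap n i j) ∧ Incoming (Rface n j) (LRcap n i j)) ∨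
     (Outgoing (Lface n i) (LRcap n i j) ∧ Outgoing (Rface n j) (LRcap n i j))) := by
  have hji := Ne.symm hij
  constructor
  · unfold IsFace
    have h1 : Finset.filter (fun q => LRcap n i j q = none) Finset.univ
        = Finset.univ \ {i, j} := by
      ext q; rw [Finset.mem_filter]
      by_cases h : q = i <;> by_cases h' : q = j <;> simp [LRcap, h, h', hij, hji]
    rw [h1, Finset.card_sdiff_of_subset (by simp), Finset.card_pair hij]
    simp
  · rcases lt_or_gt_of_ne hij with hlt | hgt
    · -- i < j : incoming for both
      left
      have hj1 : 1 ≤ (j : ℕ) := by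
        have := Fin.lt_iff_val_lt_val.mp hlt; omega
      constructor
      · refine ⟨j, by simp [Lface, hji], ?_, ?_⟩
        · rw [kappa_L, if_pos hlt]
          have hd : decide (Odd ((j : ℕ) - 1)) = decide (Even (j : ℕ)) := by
            rw [decide_eq_decide]; simp only [Nat.even_iff, Nat.odd_iff]; omega
          simp [LRcap, hji, hd]
        · intro q hq; by_cases h : q = i <;> simp [LRcap, Lface, h, hq]
      · refine ⟨i, by simp [Rface, hij], ?_, ?_⟩
        · rw [kappa_R, if_neg (not_lt.mpr hlt.le)]
          simp [LRcap]
        · intro q hq; by_cases h : q = j <;> simp [LRcap, Rface, h, hq, hji]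
    · -- j < i : outgoing for both
      right
      have hi1 : 1 ≤ (i : ℕ) := by
        have := Fin.lt_iff_val_lt_val.mp hgt; omega
      constructor
      · refine ⟨j, by simp [Lface, hji], ?_, ?_⟩
        · rw [kappa_L, if_neg (not_lt.mpr hgt.le)]
          have hd : (!decide (Odd ((j : ℕ)))) = decide (Even (j : ℕ)) := by
            rw [← decide_not, decide_eq_decide]
            simp only [Nat.even_iff, Nat.odd_iff]; omega
          simp [LRcap, hji, hd]
        · intro q hq; by_cases h : q = i <;> simp [LRcap, Lface, h, hq]
      · refine ⟨i, by simp [Rface, hij], ?_, ?_⟩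
        · rw [kappa_R, if_pos hgt]
          have hd : (!decide (Odd ((i : ℕ) - 1))) = decide (Odd (i : ℕ)) := by
            rw [← decide_not, decide_eq_decide]
            simp only [Nat.even_iff, Nat.odd_iff]; omega
          simp [LRcap, hd]
        · intro q hq; by_cases h : q = j <;> simp [LRcap, Rface, h, hq, hji]
end

section
/- Let n ≥ 2, N ≥ n+1, X a set and R : X^n → X^n, and let c be a permitted coloring of I^N with respect to R. Fix a position m with 1 ≤ m ≤ N and a digit d ∈ {0,1}, and let ι be the map from faces of I^{N−1} to faces of I^N that inserts the symbol d at position m (shifting the remaining symbols). Then the coloring of I^{N−1} defined by g ↦ c(ι(g)) on (n−1)-faces g of I^{N−1} is a permitted coloring of I^{N−1}. -/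
/-- The incoming subface of an `n`-face `f` obtained by replacing the asterisk at
position `p` by the digit `κ(f, p)`. -/
def inAt {N : ℕ} (f : CubeFace N) (p : Fin N) : CubeFace N :=
  fun q => if q = p then some (kappa f p) else f q

/-- The outgoing subface of an `n`-face `f` obtained by replacing the asterisk at
position `p` by the digit different from `κ(f, p)`. -/
def outAt {N : ℕ} (f : CubeFace N) (p : Fin N) : CubeFace N :=
  fun q => if q = p then some (!kappa f p) else f q

/-- A coloring `c` (a map assigning colors, in particular to the `(n-1)`-faces of
`I^N`) is permitted with respect to `R : Xⁿ → Xⁿ` if for every `n`-face `f`, with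
asterisk positions enumerated in increasing order by `p : Fin n → Fin N`, the colors of
its outgoing `(n-1)`-subfaces (listed in increasing order of the replaced asterisk
position) are the image under `R` of the colors of its incoming `(n-1)`-subfaces
(listed likewise). -/
def Permitted {N n : ℕ} {X : Type*} (R : (Fin n → X) → (Fin n → X))
    (c : CubeFace N → X) : Prop :=
  ∀ f : CubeFace N, IsFace n f →
    ∀ p : Fin n → Fin N, StrictMono p → (∀ k, f (p k) = none) →
      (fun k => c (outAt f (p k))) = R (fun k => c (inAt f (p k)))


private lemma filter_succAbove_card {M : ℕ} (m : Fin (M + 1)) (P : Fin (M + 1) → Prop)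
    [DecidablePred P] (Q : Fin M → Prop) [DecidablePred Q] (hm : ¬ P m)
    (h : ∀ i, P (m.succAbove i) ↔ Q i) :
    (Finset.filter P Finset.univ).card = (Finset.filter Q Finset.univ).card := by
  have heq : Finset.filter P Finset.univ
      = (Finset.filter Q Finset.univ).image m.succAbove := by
    ext r
    simp only [Finset.mem_filter, Finset.mem_univ, true_and, Finset.mem_image]
    constructor
    · intro hr
      rcases eq_or_ne r m with rfl | hrm
      · exact absurd hr hm
      · obtain ⟨i, rfl⟩ := Fin.exists_succAbove_eq hrm
        exact ⟨i, (h i).1 hr, rfl⟩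
    · rintro ⟨i, hi, rfl⟩
      exact (h i).2 hi
  rw [heq, Finset.card_image_of_injective _ (Fin.succAbove_right_injective)]

private lemma kappa_insert {M : ℕ} (m : Fin (M + 1)) (d : Bool) (g : CubeFace M)
    (q : Fin M) : kappa (m.insertNth (some d) g) (m.succAbove q) = kappa g q := by
  have hcard := filter_succAbove_card m
    (fun r => r < m.succAbove q ∧ (m.insertNth (some d) g : CubeFace (M + 1)) r = none)
    (fun r => r < q ∧ g r = none)
    (by simp [Fin.insertNth_apply_same])
    (by intro i; simp [Fin.insertNth_apply_succAbove, Fin.succAbove_lt_succAbove_iff])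
  unfold kappa
  rw [hcard]

private lemma inAt_insert {M : ℕ} (m : Fin (M + 1)) (d : Bool) (g : CubeFace M)
    (q : Fin M) : inAt (m.insertNth (some d) g) (m.succAbove q)
      = m.insertNth (some d) (inAt g q) := by
  funext r
  rcases eq_or_ne r m with heq | hrm
  · subst heq
    have hne := Fin.ne_succAbove r q
    simp [inAt, Fin.insertNth_apply_same, hne]
  · obtain ⟨i, rfl⟩ := Fin.exists_succAbove_eq hrm
    by_cases hiq : i = q
    · subst hiq
      simp [inAt, Fin.insertNth_apply_succAbove, kappa_insert]
    · simp [inAt, Fin.insertNth_apply_succAbove, hiq,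
        (Fin.succAbove_right_injective (p := m)).ne hiq]

private lemma outAt_insert {M : ℕ} (m : Fin (M + 1)) (d : Bool) (g : CubeFace M)
    (q : Fin M) : outAt (m.insertNth (some d) g) (m.succAbove q)
      = m.insertNth (some d) (outAt g q) := by
  funext r
  rcases eq_or_ne r m with heq | hrm
  · subst heq
    have hne := Fin.ne_succAbove r q
    simp [outAt, Fin.insertNth_apply_same, hne]
  · obtain ⟨i, rfl⟩ := Fin.exists_succAbove_eq hrm
    by_cases hiq : i = q
    · subst hiq
      simp [outAt, Fin.insertNth_apply_succAbove, kappa_insert]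
    · simp [outAt, Fin.insertNth_apply_succAbove, hiq,
        (Fin.succAbove_right_injective (p := m)).ne hiq]

/-- Restricting a permitted coloring of `I^{M+1}` along the face inclusion
`ι` of `I^M` into `I^{M+1}` that inserts the digit `d` at position `m` yields a
permitted coloring of `I^M`. -/
theorem stmt10 (n M : ℕ) (hn : 2 ≤ n) (hM : n ≤ M) (X : Type*)
    (R : (Fin n → X) → (Fin n → X))
    (c : CubeFace (M + 1) → X) (hc : Permitted R c) (m : Fin (M + 1)) (d : Bool) :
    Permitted R (fun g : CubeFace M => c (m.insertNth (some d) g)) := by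
  intro g hg p hp hast
  have hF : IsFace n (m.insertNth (some d) g) := by
    unfold IsFace at hg ⊢
    rw [← hg]
    exact filter_succAbove_card m
      (fun i => (m.insertNth (some d) g : CubeFace (M + 1)) i = none)
      (fun i => g i = none) (by simp [Fin.insertNth_apply_same])
      (by intro i; simp [Fin.insertNth_apply_succAbove])
  have hsm : StrictMono (fun k => m.succAbove (p k)) :=
    (Fin.strictMono_succAbove m).comp hp
  have hast' : ∀ k, (m.insertNth (some d) g : CubeFace (M + 1)) (m.succAbove (p k)) = none := by
    intro k
    rw [Fin.insertNth_apply_succAbove]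
    exact hast k
  have key := hc (m.insertNth (some d) g) hF (fun k => m.succAbove (p k)) hsm hast'
  simp only [outAt_insert, inAt_insert] at key
  exact key
end

section
/- Let X = {x ∈ ℤ/25ℤ : x ≡ 2 (mod 5)} and let R : X³ → X³ be the restriction of the electric map R(x,y,z) = (xy·w⁻¹, w, yz·w⁻¹), w = x + z + xyz (which is well defined on X³). Then: (1) there exists a group homomorphism η : (ℤ/25ℤ)ˣ → ℂˣ with η(7) ≠ 1; (2) for every such η, the function φ(x,y,z) = η(y) (well defined since every element of X is a unit of ℤ/25ℤ) is a multiplicative tetrahedral 3-cocycle for R that is not a coboundary: there is no function ψ : X → ℂˣ such that η(y) = ψ(x)ψ(y)ψ(z)·(ψ(x')ψ(y')ψ(z'))⁻¹ for all (x,y,z) ∈ X³, where (x',y',z') = R(x,y,z). -/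
/-- `φ : Y³ → G` is a multiplicative tetrahedral 3-cocycle for `R : Y³ → Y³`: for all
`a₁, …, a₆`, with the intermediate values defined by the left-hand-side composition
`(a₁',a₂',a₃') = R(a₁,a₂,a₃)`, `(a₁'',a₄',a₅') = R(a₁',a₄,a₅)`,
`(a₂'',a₄'',a₆') = R(a₂',a₄',a₆)`, `(a₃'',a₅'',a₆'') = R(a₃',a₅',a₆')` and the
right-hand-side composition `(b₃,b₅,b₆) = R(a₃,a₅,a₆)`, `(b₂,b₄,c₆) = R(a₂,a₄,b₆)`,
`(b₁,c₄,c₅) = R(a₁,b₄,b₅)`, `(c₁,c₂,c₃) = R(b₁,b₂,b₃)`, one has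
`φ(a₁,a₂,a₃)φ(a₁',a₄,a₅)φ(a₂',a₄',a₆)φ(a₃',a₅',a₆') =
 φ(a₃,a₅,a₆)φ(a₂,a₄,b₆)φ(a₁,b₄,b₅)φ(b₁,b₂,b₃)`. -/
def Cocycle3 {Y G : Type*} [CommGroup G]
    (R : Y × Y × Y → Y × Y × Y) (φ : Y × Y × Y → G) : Prop :=
  ∀ a1 a2 a3 a4 a5 a6 a1' a2' a3' a1'' a4' a5' a2'' a4'' a6' a3'' a5'' a6''
      b1 b2 b3 b4 b5 b6 c1 c2 c3 c4 c5 c6 : Y,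
    (a1', a2', a3') = R (a1, a2, a3) → (a1'', a4', a5') = R (a1', a4, a5) →
    (a2'', a4'', a6') = R (a2', a4', a6) → (a3'', a5'', a6'') = R (a3', a5', a6') →
    (b3, b5, b6) = R (a3, a5, a6) → (b2, b4, c6) = R (a2, a4, b6) →
    (b1, c4, c5) = R (a1, b4, b5) → (c1, c2, c3) = R (b1, b2, b3) →
    φ (a1, a2, a3) * φ (a1', a4, a5) * φ (a2', a4', a6) * φ (a3', a5', a6') =
      φ (a3, a5, a6) * φ (a2, a4, b6) * φ (a1, b4, b5) * φ (b1, b2, b3)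

/-- `φ` is a multiplicative tetrahedral 3-coboundary (of some `ψ`) for `R`. -/
def IsCoboundary {Y G : Type*} [CommGroup G]
    (R : Y × Y × Y → Y × Y × Y) (φ : Y × Y × Y → G) : Prop :=
  ∃ ψ : Y → G, ∀ t : Y × Y × Y,
    φ t = ψ t.1 * ψ t.2.1 * ψ t.2.2 *
            (ψ (R t).1 * ψ (R t).2.1 * ψ (R t).2.2)⁻¹


lemma myMulInv (a b : ZMod 25) (h : IsUnit b) : b * (a * b⁻¹) = a := by
  rw [mul_comm a, ← mul_assoc, ZMod.mul_inv_of_unit _ h, one_mul]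

lemma myIsUnit (x : ZMod 25) (hx : ZMod.castHom (by norm_num : (5:ℕ) ∣ 25) (ZMod 5) x = 2) :
    IsUnit x := by revert hx; revert x; decide

/-- Let `X = {x ∈ ℤ/25ℤ : x ≡ 2 (mod 5)}` and let `R : X³ → X³` be the restriction of
the electric map `(x,y,z) ↦ (xy·w⁻¹, w, yz·w⁻¹)`, `w = x + z + xyz`.  Then: (1) there
is a group homomorphism `η : (ℤ/25ℤ)ˣ → ℂˣ` with `η(7) ≠ 1`; and (2) for every such
`η`, the function `φ(x,y,z) = η(y)` is a multiplicative tetrahedral 3-cocycle for `R`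
that is not a coboundary. -/
theorem stmt19 (red : ZMod 25 →+* ZMod 5)
    (hred : red = ZMod.castHom (by norm_num : (5 : ℕ) ∣ 25) (ZMod 5)) :
    (∃ η : (ZMod 25)ˣ →* ℂˣ,
      ∀ u : (ZMod 25)ˣ, (u : ZMod 25) = 7 → η u ≠ 1) ∧
    (∀ η : (ZMod 25)ˣ →* ℂˣ,
      (∀ u : (ZMod 25)ˣ, (u : ZMod 25) = 7 → η u ≠ 1) →
      ∀ R : {x : ZMod 25 // red x = 2} × {x : ZMod 25 // red x = 2} ×
              {x : ZMod 25 // red x = 2} →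
            {x : ZMod 25 // red x = 2} × {x : ZMod 25 // red x = 2} ×
              {x : ZMod 25 // red x = 2},
        (∀ t, (R t).1.val
                = t.1.val * t.2.1.val *
                    (t.1.val + t.2.2.val + t.1.val * t.2.1.val * t.2.2.val)⁻¹ ∧
              (R t).2.1.val
                = t.1.val + t.2.2.val + t.1.val * t.2.1.val * t.2.2.val ∧
              (R t).2.2.val
                = t.2.1.val * t.2.2.val *
                    (t.1.val + t.2.2.val + t.1.val * t.2.1.val * t.2.2.val)⁻¹) →
        ∀ φ : {x : ZMod 25 // red x = 2} × {x : ZMod 25 // red x = 2} ×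
                {x : ZMod 25 // red x = 2} → ℂˣ,
          (∀ t, ∀ u : (ZMod 25)ˣ, (u : ZMod 25) = t.2.1.val → φ t = η u) →
          Cocycle3 R φ ∧ ¬ IsCoboundary R φ) := by
  subst hred
  set red := ZMod.castHom (by norm_num : (5:ℕ) ∣ 25) (ZMod 5) with hredd
  set u7 : (ZMod 25)ˣ := ZMod.unitOfCoprime 7 (by norm_num) with hu7def
  have hu7 : (u7 : ZMod 25) = 7 := by decide
  constructor
  · have hne : u7 ≠ 1 := by decide
    obtain ⟨η, hη⟩ := CommGroup.exists_apply_ne_one_of_hasEnoughRootsOfUnity ((ZMod 25)ˣ) ℂ hne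
    exact ⟨η, fun u hu => by
      have : u = u7 := Units.ext (hu.trans hu7.symm)
      rw [this]; exact hη⟩
  · intro η hη R hR φ hφ
    -- units attached to elements of X
    have hU : ∀ y : {x : ZMod 25 // red x = 2}, IsUnit y.val := fun y => myIsUnit y.val y.prop
    set U : {x : ZMod 25 // red x = 2} → (ZMod 25)ˣ := fun y => (hU y).unit with hUdef
    have hUval : ∀ y, ((U y : (ZMod 25)ˣ) : ZMod 25) = y.val := fun y => (hU y).unit_spec
    have hφU : ∀ t, φ t = η (U t.2.1) := fun t => hφ t (U t.2.1) (hUval _)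
    constructor
    · intro a1 a2 a3 a4 a5 a6 a1' a2' a3' a1'' a4' a5' a2'' a4'' a6' a3'' a5'' a6''
        b1 b2 b3 b4 b5 b6 c1 c2 c3 c4 c5 c6 h1 h2 h3 h4 h5 h6 h7 h8
    -- extract component equations
      rw [Prod.ext_iff] at h2 h6
      obtain ⟨h2a, h2bc⟩ := h2
      rw [Prod.ext_iff] at h2bc
      obtain ⟨h2b, h2c⟩ := h2bc
      obtain ⟨h6a, h6bc⟩ := h6
      rw [Prod.ext_iff] at h6bc
      obtain ⟨h6b, h6c⟩ := h6bc
      obtain ⟨hr1, hr2, hr3⟩ := hR (a1', a4, a5)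
      obtain ⟨hs1, hs2, hs3⟩ := hR (a2, a4, b6)
      have ha4' : (a4' : ZMod 25) = (a1' : ZMod 25) + a5 + a1' * a4 * a5 := by
        have h := hr2; rw [← h2b] at h; exact h
      have ha5' : (a5' : ZMod 25) = (a4 : ZMod 25) * a5 * ((a4' : ZMod 25))⁻¹ := by
        rw [ha4']; have h := hr3; rw [← h2c] at h; exact h
      have hb4 : (b4 : ZMod 25) = (a2 : ZMod 25) + b6 + a2 * a4 * b6 := by
        have h := hs2; rw [← h6b] at h; exact h
      have hb2 : (b2 : ZMod 25) = (a2 : ZMod 25) * a4 * ((b4 : ZMod 25))⁻¹ := by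
        rw [hb4]; have h := hs1; rw [← h6a] at h; exact h
      have e45 : (a4' : ZMod 25) * a5' = (a4 : ZMod 25) * a5 := by
        rw [ha5']; exact myMulInv _ _ (hU a4')
      have e24 : (b4 : ZMod 25) * b2 = (a2 : ZMod 25) * a4 := by
        rw [hb2]; exact myMulInv _ _ (hU b4)
      rw [hφU (a1, a2, a3), hφU (a1', a4, a5), hφU (a2', a4', a6), hφU (a3', a5', a6'),
        hφU (a3, a5, a6), hφU (a2, a4, b6), hφU (a1, b4, b5), hφU (b1, b2, b3)]
      simp only [← map_mul]
      congr 1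
      apply Units.ext
      simp only [Units.val_mul, hUval]
      linear_combination a2.val * a4.val * e45 - a5.val * a4.val * e24
    · rintro ⟨ψ, hψ⟩
      have hx2 : red (2 : ZMod 25) = 2 := by rw [hredd]; decide
      have hy7 : red (7 : ZMod 25) = 2 := by rw [hredd]; decide
      set x2 : {x : ZMod 25 // red x = 2} := ⟨2, hx2⟩ with hx2d
      set y7 : {x : ZMod 25 // red x = 2} := ⟨7, hy7⟩ with hy7d
      set t : _ := (x2, y7, x2) with htd
      obtain ⟨ht1, ht2, ht3⟩ := hR t
      have hRt1 : (R t).1 = x2 := by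
        apply Subtype.ext; rw [ht1]
        show (2 * 7 * (2 + 2 + 2 * 7 * 2)⁻¹ : ZMod 25) = 2
        have hw : (2 + 2 + 2 * 7 * 2 : ZMod 25) = 7 := by decide
        have h7u : IsUnit (7 : ZMod 25) := by decide
        rw [hw, mul_assoc, ZMod.mul_inv_of_unit _ h7u, mul_one]
      have hRt2 : (R t).2.1 = y7 := by
        apply Subtype.ext; rw [ht2]
        show (2 + 2 + 2 * 7 * 2 : ZMod 25) = 7
        decide
      have hRt3 : (R t).2.2 = x2 := by
        apply Subtype.ext; rw [ht3]
        show (7 * 2 * (2 + 2 + 2 * 7 * 2)⁻¹ : ZMod 25) = 2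
        have hw : (2 + 2 + 2 * 7 * 2 : ZMod 25) = 7 := by decide
        have h7u : IsUnit (7 : ZMod 25) := by decide
        rw [hw, mul_comm (7 : ZMod 25) 2, mul_assoc, ZMod.mul_inv_of_unit _ h7u, mul_one]
      have := hψ t
      rw [hRt1, hRt2, hRt3] at this
      have hφt : φ t = η u7 := hφ t u7 hu7
      rw [hφt] at this
      exact hη u7 hu7 (by rw [this, mul_inv_cancel])
end
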